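/- Let f(a,b) = 1 - exp(-(b/γ)(1 - exp(-a/ζ))) with γ, ζ > 0. For all a, b > 0, the second partial derivative f_{aa}(a,b) is strictly negative. -/

import Mathlib

open Real

lemma aux_hd1 (γ ζ b : ℝ) (hζ : ζ ≠ 0) (a : ℝ) :
    HasDerivAt (fun a' : ℝ => 1 - exp (-(b / γ) * (1 - exp (-a' / ζ))))
      (-(exp (-(b / γ) * (1 - exp (-a / ζ))) * (-(b / γ) * (exp (-a / ζ) * (1 / ζ))))) a := by
  have h1 : HasDerivAt (fun a' : ℝ => -a' / ζ) (-1 / ζ) a := by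
    simpa using (hasDerivAt_id a).neg.div_const ζ
  have h2 : HasDerivAt (fun a' : ℝ => exp (-a' / ζ)) (exp (-a / ζ) * (-1 / ζ)) a := h1.exp
  have h3 : HasDerivAt (fun a' : ℝ => -(b / γ) * (1 - exp (-a' / ζ)))
      (-(b / γ) * (0 - exp (-a / ζ) * (-1 / ζ))) a :=
    ((hasDerivAt_const a (1:ℝ)).sub h2).const_mul _
  have h4 := h3.exp
  have h5 : HasDerivAt (fun a' : ℝ => 1 - exp (-(b / γ) * (1 - exp (-a' / ζ)))) _ a :=
    ((hasDerivAt_const a (1:ℝ)).sub h4)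
  convert h5 using 1
  ring

lemma aux_deriv1 (γ ζ b : ℝ) (hζ : ζ ≠ 0) :
    deriv (fun a' : ℝ => 1 - exp (-(b / γ) * (1 - exp (-a' / ζ)))) =
      fun a : ℝ => b / (γ * ζ) * exp (-a / ζ) * exp (-(b / γ) * (1 - exp (-a / ζ))) := by
  funext a
  rw [(aux_hd1 γ ζ b hζ a).deriv]
  field_simp

/-- For `f(a,b) = 1 - exp(-(b/γ)(1 - exp(-a/ζ)))` with `γ, ζ > 0` and `a, b > 0`,
the second partial derivative `f_{aa}` is strictly negative. -/
theorem stmt_7 (γ ζ : ℝ) (hγ : 0 < γ) (hζ : 0 < ζ) :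
    ∀ a b : ℝ, 0 < a → 0 < b →
      deriv (deriv (fun a' : ℝ => 1 - exp (-(b / γ) * (1 - exp (-a' / ζ))))) a < 0 := by
  intro a b ha hb
  rw [aux_deriv1 γ ζ b hζ.ne']
  -- derivative of F a = C * exp(-a/ζ) * exp(u a), C = b/(γζ)
  set C := b / (γ * ζ) with hC
  have h1 : HasDerivAt (fun a' : ℝ => -a' / ζ) (-1 / ζ) a := by
    simpa using (hasDerivAt_id a).neg.div_const ζ
  have h2 : HasDerivAt (fun a' : ℝ => exp (-a' / ζ)) (exp (-a / ζ) * (-1 / ζ)) a := h1.exp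
  have h3 : HasDerivAt (fun a' : ℝ => -(b / γ) * (1 - exp (-a' / ζ)))
      (-(b / γ) * (0 - exp (-a / ζ) * (-1 / ζ))) a :=
    ((hasDerivAt_const a (1:ℝ)).sub h2).const_mul _
  have h4 := h3.exp
  have h5 := ((h2.const_mul C).mul h4)
  have h5' : HasDerivAt (fun a' : ℝ => C * exp (-a' / ζ) * exp (-(b / γ) * (1 - exp (-a' / ζ)))) _ a := h5
  rw [h5'.deriv]
  have hexp1 : 0 < exp (-a / ζ) := exp_pos _
  have hexp2 : 0 < exp (-(b / γ) * (1 - exp (-a / ζ))) := exp_pos _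
  have hCpos : 0 < C := div_pos hb (mul_pos hγ hζ)
  have key : C * (exp (-a / ζ) * (-1 / ζ)) * exp (-(b / γ) * (1 - exp (-a / ζ))) +
      C * exp (-a / ζ) *
        (exp (-(b / γ) * (1 - exp (-a / ζ))) * (-(b / γ) * (0 - exp (-a / ζ) * (-1 / ζ)))) =
      C * exp (-a / ζ) * exp (-(b / γ) * (1 - exp (-a / ζ))) *
        (-1 / ζ - b / γ * exp (-a / ζ) / ζ) := by ring
  rw [key]
  apply mul_neg_of_pos_of_neg
  · positivity
  · have h6 : -1 / ζ - b / γ * exp (-a / ζ) / ζ = -(1 / ζ + b / γ * exp (-a / ζ) / ζ) := by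
      ring
    rw [h6, neg_lt_zero]
    positivity
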